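/- For every D ∈ ℕ and r ∈ [1,∞), there exists a countable set T′ of bounded Lipschitz functions from ℝ^D to ℝ with the property that d̃_r(P, Q) = sup_{ψ ∈ T′} | ∫ ψ dP − ∫ ψ dQ | for all P, Q ∈ 𝒫_D(r); in particular, d̃_r(P, Q) is finite for all P, Q ∈ 𝒫_D(r). -/

import Mathlib

open MeasureTheory

/-- The Euclidean norm on `ℝ^D`. -/
noncomputable def euclNorm {D : ℕ} (x : Fin D → ℝ) : ℝ :=
  Real.sqrt (∑ i, (x i) ^ 2)

/-- Pseudo-Lipschitz functions of order `r` with constant `L` on `ℝ^D` (the class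
`PL_D(r, L)`), with respect to the Euclidean norm. -/
def PLD {D : ℕ} (r L : ℝ) (ψ : (Fin D → ℝ) → ℝ) : Prop :=
  ∀ x y : Fin D → ℝ, |ψ x - ψ y| ≤
    L * euclNorm (fun i => x i - y i) *
      (1 + euclNorm x ^ (r - 1) + euclNorm y ^ (r - 1))

namespace CCFD

variable {D : ℕ}

lemma euclNorm_nonneg (x : Fin D → ℝ) : 0 ≤ euclNorm x := Real.sqrt_nonneg _

lemma euclNorm_eq_norm (x : Fin D → ℝ) :
    euclNorm x = ‖(WithLp.toLp 2 x : EuclideanSpace ℝ (Fin D))‖ := by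
  rw [EuclideanSpace.norm_eq]
  simp only [euclNorm, Real.norm_eq_abs, sq_abs, PiLp.toLp_apply]

lemma euclNorm_zero : euclNorm (0 : Fin D → ℝ) = 0 := by
  simp [euclNorm]

lemma euclNorm_triangle (x y : Fin D → ℝ) :
    euclNorm x ≤ euclNorm y + euclNorm (fun i => x i - y i) := by
  rw [euclNorm_eq_norm, euclNorm_eq_norm, euclNorm_eq_norm]
  have h : (WithLp.toLp 2 x : EuclideanSpace ℝ (Fin D)) =
      (WithLp.toLp 2 y : EuclideanSpace ℝ (Fin D)) +
        (WithLp.toLp 2 (fun i => x i - y i) : EuclideanSpace ℝ (Fin D)) := by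
    ext i
    simp only [PiLp.add_apply, PiLp.toLp_apply]
    ring
  calc ‖(WithLp.toLp 2 x : EuclideanSpace ℝ (Fin D))‖
      = ‖(WithLp.toLp 2 y : EuclideanSpace ℝ (Fin D)) +
          (WithLp.toLp 2 (fun i => x i - y i) : EuclideanSpace ℝ (Fin D))‖ := by rw [← h]
    _ ≤ _ := norm_add_le _ _

lemma euclNorm_sub_rev (x y : Fin D → ℝ) :
    euclNorm (fun i => x i - y i) = euclNorm (fun i => y i - x i) := by
  unfold euclNorm
  congr 1
  apply Finset.sum_congr rfl
  intro i _
  ring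

lemma abs_coord_le (x : Fin D → ℝ) (i : Fin D) : |x i| ≤ euclNorm x := by
  rw [← Real.sqrt_sq_eq_abs]
  exact Real.sqrt_le_sqrt (Finset.single_le_sum (f := fun j => (x j) ^ 2)
    (fun j _ => sq_nonneg _) (Finset.mem_univ i))

lemma continuous_euclNorm : Continuous (euclNorm (D := D)) := by
  unfold euclNorm
  exact Real.continuous_sqrt.comp (continuous_finset_sum _ fun i _ =>
    (continuous_apply i).pow 2)

lemma euclNorm_sub_le_dist (x y : Fin D → ℝ) :
    euclNorm (fun i => x i - y i) ≤ Real.sqrt D * dist x y := by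
  unfold euclNorm
  have h1 : ∑ i, (x i - y i) ^ 2 ≤ ∑ _i : Fin D, dist x y ^ 2 := by
    apply Finset.sum_le_sum
    intro i _
    have h0 : |x i - y i| ≤ dist x y := by
      have := dist_le_pi_dist x y i
      rwa [Real.dist_eq] at this
    calc (x i - y i) ^ 2 = |x i - y i| ^ 2 := (sq_abs _).symm
      _ ≤ dist x y ^ 2 := by
          apply pow_le_pow_left₀ (abs_nonneg _) h0
  calc Real.sqrt (∑ i, (x i - y i) ^ 2) ≤ Real.sqrt ((D : ℝ) * dist x y ^ 2) := by
        apply Real.sqrt_le_sqrt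
        simpa using h1
    _ = Real.sqrt D * dist x y := by
        rw [Real.sqrt_mul (by positivity), Real.sqrt_sq dist_nonneg]

/-- Continuity from a local Lipschitz-type estimate w.r.t. the euclidean norm. -/
lemma continuousAt_of_locLip {f : (Fin D → ℝ) → ℝ} (y : Fin D → ℝ) (C : ℝ)
    (h : ∀ x, euclNorm (fun i => x i - y i) ≤ 1 →
      |f x - f y| ≤ C * euclNorm (fun i => x i - y i)) :
    ContinuousAt f y := by
  rw [Metric.continuousAt_iff]
  intro ε hε
  set C' := max C 0 with hC'
  have hC'0 : 0 ≤ C' := le_max_right _ _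
  have h' : ∀ x, euclNorm (fun i => x i - y i) ≤ 1 →
      |f x - f y| ≤ C' * euclNorm (fun i => x i - y i) := by
    intro x hx
    exact (h x hx).trans (mul_le_mul_of_nonneg_right (le_max_left _ _) (euclNorm_nonneg _))
  have hden : (0 : ℝ) < Real.sqrt D + 1 := by positivity
  refine ⟨min 1 (ε / (C' + 1)) / (Real.sqrt D + 1), by positivity, ?_⟩
  intro x hx
  have he : euclNorm (fun i => x i - y i) ≤ min 1 (ε / (C' + 1)) := by
    have h2 : Real.sqrt D * dist x y ≤ (Real.sqrt D + 1) * dist x y :=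
      mul_le_mul_of_nonneg_right (by linarith) dist_nonneg
    have h3 : (Real.sqrt D + 1) * dist x y ≤ min 1 (ε / (C' + 1)) := by
      rw [mul_comm]
      rw [← le_div_iff₀ hden]
      exact le_of_lt hx
    exact (euclNorm_sub_le_dist x y).trans (h2.trans h3)
  have he1 : euclNorm (fun i => x i - y i) ≤ 1 := he.trans (min_le_left _ _)
  have he2 : euclNorm (fun i => x i - y i) ≤ ε / (C' + 1) := he.trans (min_le_right _ _)
  rw [Real.dist_eq]
  calc |f x - f y| ≤ C' * euclNorm (fun i => x i - y i) := h' x he1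
    _ ≤ C' * (ε / (C' + 1)) := mul_le_mul_of_nonneg_left he2 hC'0
    _ < ε := by
        rw [mul_div_assoc']
        rw [div_lt_iff₀ (by linarith)]
        nlinarith

section R

variable {r : ℝ}

lemma mul_rpow_sub_one {a : ℝ} (ha : 0 ≤ a) (hr : 1 ≤ r) : a * a ^ (r - 1) = a ^ r := by
  rcases eq_or_lt_of_le ha with h | h
  · rw [← h]
    rw [Real.zero_rpow (by intro h0; rw [h0] at hr; linarith : r ≠ 0)]
    simp
  · have h1 := Real.rpow_add h 1 (r - 1)
    rw [Real.rpow_one] at h1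
    rw [← h1]
    norm_num

lemma le_one_add_rpow {a : ℝ} (ha : 0 ≤ a) (hr : 1 ≤ r) : a ≤ 1 + a ^ r := by
  rcases le_total a 1 with h | h
  · have : (0:ℝ) ≤ a ^ r := Real.rpow_nonneg ha r
    linarith
  · calc a = a ^ (1:ℝ) := (Real.rpow_one a).symm
      _ ≤ a ^ r := Real.rpow_le_rpow_of_exponent_le h hr
      _ ≤ 1 + a ^ r := by linarith

/-- The fundamental pointwise growth bound for pseudo-Lipschitz functions. -/
lemma pl_bound (hr : 1 ≤ r) {ψ : (Fin D → ℝ) → ℝ} (hψ : PLD r 1 ψ) (x : Fin D → ℝ) :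
    |ψ x - ψ 0| ≤ 2 + 3 * euclNorm x ^ r := by
  have h := hψ x 0
  have h0 : (fun i => x i - (0 : Fin D → ℝ) i) = x := by funext i; simp
  rw [h0, euclNorm_zero] at h
  have hz := Real.zero_rpow_le_one (r - 1)
  set a := euclNorm x with ha'
  have ha := euclNorm_nonneg x
  have har : a * a ^ (r - 1) = a ^ r := mul_rpow_sub_one ha hr
  have haler : a ≤ 1 + a ^ r := le_one_add_rpow ha hr
  have harn : (0:ℝ) ≤ a ^ (r - 1) := Real.rpow_nonneg ha _
  have harn2 : (0:ℝ) ≤ a ^ r := Real.rpow_nonneg ha _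
  nlinarith [h]

lemma pld_continuous (hr : 1 ≤ r) {ψ : (Fin D → ℝ) → ℝ} (hψ : PLD r 1 ψ) :
    Continuous ψ := by
  rw [continuous_iff_continuousAt]
  intro y
  apply continuousAt_of_locLip y (1 + 2 * (euclNorm y + 1) ^ (r - 1))
  intro x hx
  have h := hψ x y
  have h1 : euclNorm x ≤ euclNorm y + 1 := (euclNorm_triangle x y).trans (by linarith)
  have h2 : euclNorm x ^ (r - 1) ≤ (euclNorm y + 1) ^ (r - 1) :=
    Real.rpow_le_rpow (euclNorm_nonneg x) h1 (by linarith)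
  have h3 : euclNorm y ^ (r - 1) ≤ (euclNorm y + 1) ^ (r - 1) :=
    Real.rpow_le_rpow (euclNorm_nonneg y) (by linarith) (by linarith)
  have he := euclNorm_nonneg (fun i => x i - y i)
  nlinarith [h]

lemma pld_of_lip {f : (Fin D → ℝ) → ℝ}
    (hf : ∀ x y, |f x - f y| ≤ euclNorm (fun i => x i - y i)) : PLD (D := D) r 1 f := by
  intro x y
  have h1 : (0:ℝ) ≤ euclNorm x ^ (r - 1) := Real.rpow_nonneg (euclNorm_nonneg x) _
  have h2 : (0:ℝ) ≤ euclNorm y ^ (r - 1) := Real.rpow_nonneg (euclNorm_nonneg y) _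
  have he := euclNorm_nonneg (fun i => x i - y i)
  nlinarith [hf x y]

lemma pld_min {f g : (Fin D → ℝ) → ℝ} (hf : PLD (D := D) r 1 f) (hg : PLD (D := D) r 1 g) :
    PLD (D := D) r 1 (fun x => min (f x) (g x)) := by
  intro x y
  exact (abs_min_sub_min_le_max _ _ _ _).trans (max_le (hf x y) (hg x y))

lemma pld_max {f g : (Fin D → ℝ) → ℝ} (hf : PLD (D := D) r 1 f) (hg : PLD (D := D) r 1 g) :
    PLD (D := D) r 1 (fun x => max (f x) (g x)) := by
  intro x y
  exact (abs_max_sub_max_le_max _ _ _ _).trans (max_le (hf x y) (hg x y))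

lemma pld_neg {f : (Fin D → ℝ) → ℝ} (hf : PLD (D := D) r 1 f) :
    PLD (D := D) r 1 (fun x => -f x) := by
  intro x y
  have := hf x y
  rwa [show -f x - -f y = -(f x - f y) by ring, abs_neg]

end R

/-! ### Truncation -/

/-- The spatial cut-off function. -/
noncomputable def gcut (n : ℕ) (x : Fin D → ℝ) : ℝ := max 0 ((n : ℝ) - euclNorm x)

/-- Truncation of `ψ` between `-gcut n` and `gcut n`. -/
noncomputable def trunc (n : ℕ) (ψ : (Fin D → ℝ) → ℝ) (x : Fin D → ℝ) : ℝ :=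
  max (-(gcut n x)) (min (gcut n x) (ψ x))

lemma gcut_nonneg (n : ℕ) (x : Fin D → ℝ) : 0 ≤ gcut n x := le_max_left _ _

lemma gcut_le (n : ℕ) (x : Fin D → ℝ) : gcut n x ≤ n := by
  apply max_le (Nat.cast_nonneg n)
  have := euclNorm_nonneg x
  linarith

lemma gcut_lip (n : ℕ) (x y : Fin D → ℝ) :
    |gcut n x - gcut n y| ≤ euclNorm (fun i => x i - y i) := by
  have h := abs_max_sub_max_le_max 0 ((n : ℝ) - euclNorm x) 0 ((n : ℝ) - euclNorm y)
  simp only [sub_zero, abs_zero, sub_sub_sub_cancel_left] at h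
  have h2 : |euclNorm y - euclNorm x| ≤ euclNorm (fun i => x i - y i) := by
    rw [abs_le]
    constructor
    · have := euclNorm_triangle x y
      linarith
    · have := euclNorm_triangle y x
      rw [euclNorm_sub_rev y x] at this
      linarith
  calc |gcut n x - gcut n y| ≤ max 0 |euclNorm y - euclNorm x| := h
    _ ≤ euclNorm (fun i => x i - y i) := max_le (euclNorm_nonneg _) h2

lemma abs_trunc_le_gcut (n : ℕ) (ψ : (Fin D → ℝ) → ℝ) (x : Fin D → ℝ) :
    |trunc n ψ x| ≤ gcut n x := by
  rw [abs_le]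
  constructor
  · exact le_max_left _ _
  · apply max_le
    · have := gcut_nonneg n x; linarith
    · exact min_le_left _ _

lemma abs_trunc_le_abs (n : ℕ) (ψ : (Fin D → ℝ) → ℝ) (x : Fin D → ℝ) :
    |trunc n ψ x| ≤ |ψ x| := by
  have hg := gcut_nonneg n x
  rcases le_total 0 (ψ x) with h | h
  · have hmin : 0 ≤ min (gcut n x) (ψ x) := le_min hg h
    have : trunc n ψ x = min (gcut n x) (ψ x) := max_eq_right (by linarith)
    rw [this, abs_of_nonneg hmin, abs_of_nonneg h]
    exact min_le_right _ _
  · have hmin : min (gcut n x) (ψ x) = ψ x := min_eq_right (h.trans hg)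
    unfold trunc
    rw [hmin]
    have h1 : max (-(gcut n x)) (ψ x) ≤ 0 := max_le (by linarith) h
    rw [abs_of_nonpos h1, abs_of_nonpos h]
    simp only [neg_le_neg_iff]
    exact le_max_right _ _

lemma trunc_eq_of_le {n : ℕ} {ψ : (Fin D → ℝ) → ℝ} {x : Fin D → ℝ}
    (h : |ψ x| ≤ gcut n x) : trunc n ψ x = ψ x := by
  unfold trunc
  rw [min_eq_right ((le_abs_self _).trans h)]
  exact max_eq_right (by have := neg_abs_le (ψ x); linarith [neg_le_neg h])

lemma trunc_zero_far {n : ℕ} {ψ : (Fin D → ℝ) → ℝ} {x : Fin D → ℝ}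
    (h : (n : ℝ) ≤ euclNorm x) : trunc n ψ x = 0 := by
  have hg : gcut n x = 0 := max_eq_left (by linarith)
  unfold trunc
  rw [hg, neg_zero]
  exact max_eq_left (min_le_left _ _)

section Rr

variable {r : ℝ}

lemma pld_gcut (n : ℕ) : PLD (D := D) r 1 (gcut n) := pld_of_lip (gcut_lip n)

lemma pld_trunc {ψ : (Fin D → ℝ) → ℝ} (hψ : PLD (D := D) r 1 ψ) (n : ℕ) :
    PLD (D := D) r 1 (trunc n ψ) :=
  pld_max (pld_neg (pld_gcut n)) (pld_min (pld_gcut n) hψ)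

/-- The Lipschitz constant for truncations at level `n`. -/
noncomputable def Lam (r : ℝ) (n : ℕ) : ℝ := (n : ℝ) + 1 + 2 * ((n : ℝ) + 1) ^ (r - 1)

lemma Lam_ge_one (hr : 1 ≤ r) (n : ℕ) : 1 ≤ Lam r n := by
  unfold Lam
  have h1 : (0:ℝ) ≤ ((n : ℝ) + 1) ^ (r - 1) := Real.rpow_nonneg (by positivity) _
  have : (0:ℝ) ≤ (n:ℝ) := Nat.cast_nonneg n
  linarith

lemma trunc_lip_aux (hr : 1 ≤ r) {ψ : (Fin D → ℝ) → ℝ} (hψ : PLD (D := D) r 1 ψ)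
    (n : ℕ) (x y : Fin D → ℝ) (hxy : euclNorm x ≤ euclNorm y) :
    |trunc n ψ x - trunc n ψ y| ≤ Lam r n * euclNorm (fun i => x i - y i) := by
  set e := euclNorm (fun i => x i - y i) with he'
  have he : 0 ≤ e := euclNorm_nonneg _
  have hLam := Lam_ge_one (r := r) hr n
  have hn0 : (0:ℝ) ≤ (n:ℝ) := Nat.cast_nonneg n
  -- generic bound via max/min Lipschitz estimates
  have hbase : |trunc n ψ x - trunc n ψ y| ≤ max e (max e |ψ x - ψ y|) := by
    have hA : |(-(gcut n x)) - (-(gcut n y))| ≤ e := by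
      rw [show (-(gcut n x)) - (-(gcut n y)) = -(gcut n x - gcut n y) by ring, abs_neg]
      exact gcut_lip n x y
    have hB : |min (gcut n x) (ψ x) - min (gcut n y) (ψ y)| ≤ max e |ψ x - ψ y| :=
      (abs_min_sub_min_le_max _ _ _ _).trans
        (max_le_max (gcut_lip n x y) (le_refl _))
    exact (abs_max_sub_max_le_max _ _ _ _).trans (max_le_max hA hB)
  rcases le_or_gt (euclNorm y) ((n : ℝ) + 1) with hb | hb
  · -- both in the ball of radius n+1
    have hax : euclNorm x ≤ (n : ℝ) + 1 := hxy.trans hb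
    have h2 : euclNorm x ^ (r - 1) ≤ ((n:ℝ) + 1) ^ (r - 1) :=
      Real.rpow_le_rpow (euclNorm_nonneg x) hax (by linarith)
    have h3 : euclNorm y ^ (r - 1) ≤ ((n:ℝ) + 1) ^ (r - 1) :=
      Real.rpow_le_rpow (euclNorm_nonneg y) hb (by linarith)
    have hψxy : |ψ x - ψ y| ≤ Lam r n * e := by
      have h := hψ x y
      unfold Lam
      nlinarith [h]
    have hee : e ≤ Lam r n * e := by nlinarith
    exact hbase.trans (max_le hee (max_le hee hψxy))
  · -- y is far away
    rcases le_or_gt (n : ℝ) (euclNorm x) with ha | ha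
    · -- both truncations vanish
      rw [trunc_zero_far ha, trunc_zero_far (by linarith : (n:ℝ) ≤ euclNorm y)]
      simp only [sub_zero, abs_zero]
      positivity
    · -- x is inside the ball of radius n, y is outside radius n+1, so e > 1
      have h1e : 1 ≤ e := by
        have := euclNorm_triangle y x
        rw [euclNorm_sub_rev y x, ← he'] at this
        linarith
      rw [trunc_zero_far (by linarith : (n:ℝ) ≤ euclNorm y), sub_zero]
      calc |trunc n ψ x| ≤ gcut n x := abs_trunc_le_gcut n ψ x
        _ ≤ (n : ℝ) := gcut_le n x
        _ ≤ (n : ℝ) * e := by nlinarith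
        _ ≤ Lam r n * e := by
            apply mul_le_mul_of_nonneg_right _ he
            unfold Lam
            have : (0:ℝ) ≤ ((n : ℝ) + 1) ^ (r - 1) := Real.rpow_nonneg (by positivity) _
            linarith
  
lemma trunc_lip (hr : 1 ≤ r) {ψ : (Fin D → ℝ) → ℝ} (hψ : PLD (D := D) r 1 ψ)
    (n : ℕ) (x y : Fin D → ℝ) :
    |trunc n ψ x - trunc n ψ y| ≤ Lam r n * euclNorm (fun i => x i - y i) := by
  rcases le_total (euclNorm x) (euclNorm y) with h | h
  · exact trunc_lip_aux hr hψ n x y h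
  · have := trunc_lip_aux hr hψ n y x h
    rw [abs_sub_comm, euclNorm_sub_rev]
    exact this

/-- The class of truncated pseudo-Lipschitz functions at level `n`. -/
def Kset (D : ℕ) (r : ℝ) (n : ℕ) : Set ((Fin D → ℝ) → ℝ) :=
  {φ | PLD r 1 φ ∧ (∀ x, |φ x| ≤ (n : ℝ)) ∧
    (∀ x y, |φ x - φ y| ≤ Lam r n * euclNorm (fun i => x i - y i)) ∧
    (∀ x, (n : ℝ) ≤ euclNorm x → φ x = 0)}

lemma trunc_mem_Kset (hr : 1 ≤ r) {ψ : (Fin D → ℝ) → ℝ} (hψ : PLD (D := D) r 1 ψ)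
    (n : ℕ) : trunc n ψ ∈ Kset D r n := by
  refine ⟨pld_trunc hψ n, fun x => (abs_trunc_le_gcut n ψ x).trans (gcut_le n x),
    trunc_lip hr hψ n, fun x hx => trunc_zero_far hx⟩

lemma Kset_continuous (hr : 1 ≤ r) {φ : (Fin D → ℝ) → ℝ} (hφ : φ ∈ Kset D r n) :
    Continuous φ := by
  rw [continuous_iff_continuousAt]
  intro y
  exact continuousAt_of_locLip y (Lam r n) (fun x _ => hφ.2.2.1 x y)

/-- Countable sup-norm-dense subfamilies of each `Kset`. -/
lemma exists_countable_approx (D : ℕ) (r : ℝ) (hr : 1 ≤ r) (n : ℕ) :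
    ∃ T : Set ((Fin D → ℝ) → ℝ), T.Countable ∧ T ⊆ Kset D r n ∧
      ∀ φ ∈ Kset D r n, ∀ ε : ℝ, 0 < ε → ∃ χ ∈ T, ∀ x, |χ x - φ x| ≤ ε := by
  classical
  set s : Set (Fin D → ℝ) := {x | euclNorm x ≤ (n : ℝ)} with hs
  have hscomp : IsCompact s := by
    apply Metric.isCompact_of_isClosed_isBounded
    · exact isClosed_le continuous_euclNorm continuous_const
    · apply Bornology.IsBounded.subset (Metric.isBounded_closedBall (x := (0 : Fin D → ℝ))
        (r := (n : ℝ)))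
      intro x hx
      rw [Metric.mem_closedBall]
      rw [dist_pi_le_iff (Nat.cast_nonneg n)]
      intro i
      rw [Real.dist_eq]
      simpa using (abs_coord_le x i).trans hx
  haveI : CompactSpace s := isCompact_iff_compactSpace.mp hscomp
  set ρ : ↥(Kset D r n) → C(s, ℝ) :=
    fun φ => ⟨fun x => φ.1 x.1, (Kset_continuous hr φ.2).comp continuous_subtype_val⟩
    with hρ
  obtain ⟨u, hu_count, hu_dense⟩ := TopologicalSpace.exists_countable_dense ↥(Set.range ρ)
  refine ⟨(fun a : ↥(Set.range ρ) => (Classical.choose a.2 : ↥(Kset D r n)).1) '' u,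
    (hu_count.image _), ?_, ?_⟩
  · rintro φ ⟨a, _, rfl⟩
    exact (Classical.choose a.2).2
  · intro φ hφ ε hε
    set f : C(s, ℝ) := ρ ⟨φ, hφ⟩ with hf
    have hfmem : f ∈ Set.range ρ := ⟨⟨φ, hφ⟩, rfl⟩
    obtain ⟨a, ha_ball, ha_u⟩ :=
      Metric.dense_iff.mp hu_dense ⟨f, hfmem⟩ ε hε
    refine ⟨(Classical.choose a.2 : ↥(Kset D r n)).1, ⟨a, ha_u, rfl⟩, ?_⟩
    have hρa : ρ (Classical.choose a.2) = a.1 := Classical.choose_spec a.2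
    have hdist : dist a.1 f < ε := by
      have h := Metric.mem_ball.mp ha_ball
      rwa [Subtype.dist_eq] at h
    intro x
    set χ := (Classical.choose a.2 : ↥(Kset D r n)).1 with hχ
    rcases le_or_gt (euclNorm x) (n : ℝ) with hx | hx
    · have hxs : x ∈ s := hx
      have happ : dist (a.1 ⟨x, hxs⟩) (f ⟨x, hxs⟩) ≤ dist a.1 f :=
        ContinuousMap.dist_apply_le_dist _
      have h1 : a.1 ⟨x, hxs⟩ = χ x := by rw [← hρa]; rfl
      have h2 : f ⟨x, hxs⟩ = φ x := rfl
      rw [h1, h2, Real.dist_eq] at happ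
      exact happ.trans (le_of_lt hdist)
    · have h1 : χ x = 0 := (Classical.choose a.2).2.2.2.2 x (le_of_lt hx)
      have h2 : φ x = 0 := hφ.2.2.2 x (le_of_lt hx)
      rw [h1, h2]
      simpa using le_of_lt hε

/-! ### Integrability -/

lemma integrable_rpow_moment (hr : 1 ≤ r) (P : Measure (Fin D → ℝ)) [IsProbabilityMeasure P]
    (hP : (∫⁻ x, ENNReal.ofReal (euclNorm x ^ r) ∂P) ≠ ⊤) :
    Integrable (fun x : Fin D → ℝ => euclNorm x ^ r) P := by
  have hc : Continuous fun x : Fin D → ℝ => euclNorm x ^ r :=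
    continuous_euclNorm.rpow_const (fun x => Or.inr (by linarith))
  refine ⟨hc.aestronglyMeasurable, ?_⟩
  rw [hasFiniteIntegral_iff_ofReal (Filter.Eventually.of_forall
    (fun x => Real.rpow_nonneg (euclNorm_nonneg x) r))]
  exact lt_top_iff_ne_top.mpr hP

lemma integrable_W (hr : 1 ≤ r) (P : Measure (Fin D → ℝ)) [IsProbabilityMeasure P]
    (hP : (∫⁻ x, ENNReal.ofReal (euclNorm x ^ r) ∂P) ≠ ⊤) :
    Integrable (fun x : Fin D → ℝ => 2 + 3 * euclNorm x ^ r) P :=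
  (integrable_const 2).add ((integrable_rpow_moment hr P hP).const_mul 3)

lemma integrable_pld (hr : 1 ≤ r) (P : Measure (Fin D → ℝ)) [IsProbabilityMeasure P]
    (hP : (∫⁻ x, ENNReal.ofReal (euclNorm x ^ r) ∂P) ≠ ⊤)
    {ψ : (Fin D → ℝ) → ℝ} (hψ : PLD r 1 ψ) : Integrable ψ P := by
  apply Integrable.mono' ((integrable_const |ψ 0|).add (integrable_W hr P hP))
    (pld_continuous hr hψ).aestronglyMeasurable
  apply Filter.Eventually.of_forall
  intro x
  show ‖ψ x‖ ≤ |ψ 0| + (2 + 3 * euclNorm x ^ r)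
  rw [Real.norm_eq_abs]
  have h1 := pl_bound hr hψ x
  have h2 : |ψ x| ≤ |ψ x - ψ 0| + |ψ 0| := by
    have := abs_sub_abs_le_abs_sub (ψ x) (ψ 0)
    have := abs_add_le (ψ x - ψ 0) (ψ 0)
    calc |ψ x| = |(ψ x - ψ 0) + ψ 0| := by ring_nf
      _ ≤ |ψ x - ψ 0| + |ψ 0| := abs_add_le _ _
  linarith

end Rr

end CCFD

open CCFD Filter Topology in
/-- **A countable class of bounded Lipschitz functions realising `d̃ᵣ`** (Proposition 8.1
of the paper).  For every `D` and `r ≥ 1` there is a countable set `T'` of bounded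
Lipschitz functions on `ℝ^D` such that for all probability measures `P, Q` with finite
`r`-th moments, `d̃ᵣ(P,Q) = sup_{ψ ∈ T'} |∫ψ dP − ∫ψ dQ|`; in particular
`d̃ᵣ(P,Q) = sup_{ψ ∈ PL_D(r,1)} |∫ψ dP − ∫ψ dQ|` is finite. -/
theorem countable_class_for_dtilde (D : ℕ) (r : ℝ) (hr : 1 ≤ r) :
    ∃ T' : Set ((Fin D → ℝ) → ℝ), T'.Countable ∧
      (∀ ψ ∈ T', (∃ M : ℝ, ∀ x, |ψ x| ≤ M) ∧
        (∃ L : ℝ, 0 ≤ L ∧ ∀ x y, |ψ x - ψ y| ≤ L * euclNorm (fun i => x i - y i))) ∧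
      ∀ P Q : Measure (Fin D → ℝ),
        IsProbabilityMeasure P → IsProbabilityMeasure Q →
        (∫⁻ x, ENNReal.ofReal (euclNorm x ^ r) ∂P) ≠ ⊤ →
        (∫⁻ x, ENNReal.ofReal (euclNorm x ^ r) ∂Q) ≠ ⊤ →
        BddAbove ((fun ψ => |∫ x, ψ x ∂P - ∫ x, ψ x ∂Q|) '' {ψ | PLD r 1 ψ}) ∧
        sSup ((fun ψ => |∫ x, ψ x ∂P - ∫ x, ψ x ∂Q|) '' {ψ | PLD r 1 ψ}) =
          sSup ((fun ψ => |∫ x, ψ x ∂P - ∫ x, ψ x ∂Q|) '' T') := by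
  classical
  choose T hT_count hT_sub hT_approx using exists_countable_approx D r hr
  refine ⟨⋃ n, T n, Set.countable_iUnion hT_count, ?_, ?_⟩
  · rintro ψ hψ
    obtain ⟨n, hn⟩ := Set.mem_iUnion.mp hψ
    obtain ⟨hpld, hbdd, hlip, hzero⟩ := hT_sub n hn
    exact ⟨⟨(n : ℝ), hbdd⟩, ⟨Lam r n, by linarith [Lam_ge_one (r := r) hr n], hlip⟩⟩
  · intro P Q hPprob hQprob hP hQ
    haveI := hPprob; haveI := hQprob
    set I : ((Fin D → ℝ) → ℝ) → ℝ := fun ψ => |∫ x, ψ x ∂P - ∫ x, ψ x ∂Q| with hI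
    set C : ℝ := (∫ x, (2 + 3 * euclNorm x ^ r) ∂P) + (∫ x, (2 + 3 * euclNorm x ^ r) ∂Q)
      with hC
    -- the uniform bound for pseudo-Lipschitz functions
    have key : ∀ ψ : (Fin D → ℝ) → ℝ, PLD r 1 ψ → I ψ ≤ C := by
      intro ψ hψ
      set ψ₀ : (Fin D → ℝ) → ℝ := fun x => ψ x - ψ 0 with hψ₀
      have hψ₀pld : PLD r 1 ψ₀ := by
        intro x y
        have := hψ x y
        simpa [hψ₀, sub_sub_sub_cancel_right] using this
      have hψ₀P : Integrable ψ₀ P := integrable_pld hr P hP hψ₀pld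
      have hψ₀Q : Integrable ψ₀ Q := integrable_pld hr Q hQ hψ₀pld
      have hshiftP : ∫ x, ψ x ∂P = (∫ x, ψ₀ x ∂P) + ψ 0 := by
        have : ∫ x, ψ x ∂P = ∫ x, (ψ₀ x + ψ 0) ∂P := by
          congr 1; funext x; simp [hψ₀]
        rw [this, integral_add hψ₀P (integrable_const _), integral_const]
        simp
      have hshiftQ : ∫ x, ψ x ∂Q = (∫ x, ψ₀ x ∂Q) + ψ 0 := by
        have : ∫ x, ψ x ∂Q = ∫ x, (ψ₀ x + ψ 0) ∂Q := by
          congr 1; funext x; simp [hψ₀]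
        rw [this, integral_add hψ₀Q (integrable_const _), integral_const]
        simp
      have habs : ∀ (μ : Measure (Fin D → ℝ)), IsProbabilityMeasure μ →
          (∫⁻ x, ENNReal.ofReal (euclNorm x ^ r) ∂μ) ≠ ⊤ →
          |∫ x, ψ₀ x ∂μ| ≤ ∫ x, (2 + 3 * euclNorm x ^ r) ∂μ := by
        intro μ hμprob hμ
        haveI := hμprob
        have hint : Integrable ψ₀ μ := integrable_pld hr μ hμ hψ₀pld
        calc |∫ x, ψ₀ x ∂μ| ≤ ∫ x, |ψ₀ x| ∂μ := by
              simpa [Real.norm_eq_abs] using norm_integral_le_integral_norm (μ := μ) ψ₀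
          _ ≤ ∫ x, (2 + 3 * euclNorm x ^ r) ∂μ := by
              apply integral_mono hint.abs (integrable_W hr μ hμ)
              intro x
              have := pl_bound hr hψ x
              simpa [hψ₀] using this
      have h1 := habs P hPprob hP
      have h2 := habs Q hQprob hQ
      show |∫ x, ψ x ∂P - ∫ x, ψ x ∂Q| ≤ C
      rw [hshiftP, hshiftQ]
      have heq : |((∫ x, ψ₀ x ∂P) + ψ 0) - ((∫ x, ψ₀ x ∂Q) + ψ 0)|
          = |(∫ x, ψ₀ x ∂P) - (∫ x, ψ₀ x ∂Q)| := by congr 1; ring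
      rw [heq]
      have h3 := abs_sub (∫ x, ψ₀ x ∂P) (∫ x, ψ₀ x ∂Q)
      rw [hC]
      linarith
    have hPLD_nonempty : (0 : (Fin D → ℝ) → ℝ) ∈ {ψ | PLD r 1 ψ} := by
      intro x y
      have h1 : (0:ℝ) ≤ euclNorm x ^ (r - 1) := Real.rpow_nonneg (euclNorm_nonneg x) _
      have h2 : (0:ℝ) ≤ euclNorm y ^ (r - 1) := Real.rpow_nonneg (euclNorm_nonneg y) _
      have he := euclNorm_nonneg (fun i => x i - y i)
      simp only [Pi.zero_apply, sub_zero, abs_zero]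
      nlinarith
    have hBdd : BddAbove (I '' {ψ | PLD r 1 ψ}) := by
      refine ⟨C, ?_⟩
      rintro a ⟨ψ, hψ, rfl⟩
      exact key ψ hψ
    have hT'sub : (⋃ n, T n) ⊆ {ψ | PLD r 1 ψ} := by
      intro ψ hψ
      obtain ⟨n, hn⟩ := Set.mem_iUnion.mp hψ
      exact (hT_sub n hn).1
    have hBdd' : BddAbove (I '' (⋃ n, T n)) :=
      hBdd.mono (Set.image_mono hT'sub)
    -- nonemptiness of T'
    have hzero_mem : (0 : (Fin D → ℝ) → ℝ) ∈ Kset D r 0 := by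
      refine ⟨hPLD_nonempty, fun x => by simp, fun x y => ?_, fun x _ => rfl⟩
      simp only [Pi.zero_apply, sub_self, abs_zero]
      have h1 : (0:ℝ) ≤ Lam r 0 := by linarith [Lam_ge_one (r := r) hr 0]
      exact mul_nonneg h1 (euclNorm_nonneg _)
    have hT'_nonempty : (⋃ n, T n).Nonempty := by
      obtain ⟨χ, hχ, -⟩ := hT_approx 0 0 hzero_mem 1 one_pos
      exact ⟨χ, Set.mem_iUnion.mpr ⟨0, hχ⟩⟩
    refine ⟨hBdd, le_antisymm ?_ ?_⟩
    · -- S ≤ S' : the approximation argument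
      apply csSup_le ((Set.nonempty_of_mem hPLD_nonempty).image I)
      rintro a ⟨ψ, hψ, rfl⟩
      set S' : ℝ := sSup (I '' ⋃ n, T n) with hS'
      -- reduce to the centered function
      set ψ₀ : (Fin D → ℝ) → ℝ := fun x => ψ x - ψ 0 with hψ₀
      have hψ₀pld : PLD r 1 ψ₀ := by
        intro x y
        have := hψ x y
        simpa [hψ₀, sub_sub_sub_cancel_right] using this
      have hψ₀0 : ψ₀ 0 = 0 := by simp [hψ₀]
      have hψ₀P : Integrable ψ₀ P := integrable_pld hr P hP hψ₀pld
      have hψ₀Q : Integrable ψ₀ Q := integrable_pld hr Q hQ hψ₀pld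
      have hIψ : I ψ = I ψ₀ := by
        show |∫ x, ψ x ∂P - ∫ x, ψ x ∂Q| = |∫ x, ψ₀ x ∂P - ∫ x, ψ₀ x ∂Q|
        have hsP : ∫ x, ψ x ∂P = (∫ x, ψ₀ x ∂P) + ψ 0 := by
          have : ∫ x, ψ x ∂P = ∫ x, (ψ₀ x + ψ 0) ∂P := by
            congr 1; funext x; simp [hψ₀]
          rw [this, integral_add hψ₀P (integrable_const _), integral_const]
          simp
        have hsQ : ∫ x, ψ x ∂Q = (∫ x, ψ₀ x ∂Q) + ψ 0 := by
          have : ∫ x, ψ x ∂Q = ∫ x, (ψ₀ x + ψ 0) ∂Q := by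
            congr 1; funext x; simp [hψ₀]
          rw [this, integral_add hψ₀Q (integrable_const _), integral_const]
          simp
        rw [hsP, hsQ]
        congr 1
        ring
      -- dominated convergence for the truncations
      have hbound_ptwise : ∀ (m : ℕ) x, |trunc m ψ₀ x| ≤ 2 + 3 * euclNorm x ^ r := by
        intro m x
        have h1 := abs_trunc_le_abs m ψ₀ x
        have h2 := pl_bound hr hψ₀pld x
        rw [hψ₀0, sub_zero] at h2
        linarith
      have hlim_ptwise : ∀ x, Tendsto (fun m : ℕ => trunc m ψ₀ x) atTop (𝓝 (ψ₀ x)) := by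
        intro x
        have hev : (fun _ : ℕ => ψ₀ x) =ᶠ[atTop] fun m => trunc m ψ₀ x := by
          filter_upwards [Filter.eventually_ge_atTop ⌈euclNorm x + |ψ₀ x|⌉₊] with m hm
          refine (trunc_eq_of_le ?_).symm
          have hle : euclNorm x + |ψ₀ x| ≤ (m : ℝ) :=
            (Nat.le_ceil _).trans (Nat.cast_le.mpr hm)
          have h2 : |ψ₀ x| ≤ (m : ℝ) - euclNorm x := by linarith
          exact h2.trans (le_max_right _ _)
        exact Tendsto.congr' hev tendsto_const_nhds
      have hDCT : ∀ (μ : Measure (Fin D → ℝ)), IsProbabilityMeasure μ →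
          (∫⁻ x, ENNReal.ofReal (euclNorm x ^ r) ∂μ) ≠ ⊤ →
          Tendsto (fun m : ℕ => ∫ x, trunc m ψ₀ x ∂μ) atTop (𝓝 (∫ x, ψ₀ x ∂μ)) := by
        intro μ hμprob hμ
        haveI := hμprob
        apply tendsto_integral_of_dominated_convergence
          (fun x => 2 + 3 * euclNorm x ^ r)
          (fun m => (Kset_continuous hr (trunc_mem_Kset hr hψ₀pld m)).aestronglyMeasurable)
          (integrable_W hr μ hμ)
        · intro m
          apply Filter.Eventually.of_forall
          intro x
          rw [Real.norm_eq_abs]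
          exact hbound_ptwise m x
        · exact Filter.Eventually.of_forall hlim_ptwise
      have htendsto : Tendsto
          (fun m : ℕ => |∫ x, trunc m ψ₀ x ∂P - ∫ x, trunc m ψ₀ x ∂Q|) atTop
          (𝓝 |∫ x, ψ₀ x ∂P - ∫ x, ψ₀ x ∂Q|) :=
        ((hDCT P hPprob hP).sub (hDCT Q hQprob hQ)).abs
      -- each truncation is approximated by an element of T m
      have hstep : ∀ m : ℕ, |∫ x, trunc m ψ₀ x ∂P - ∫ x, trunc m ψ₀ x ∂Q|
          ≤ S' + 2 * (1 / ((m : ℝ) + 1)) := by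
        intro m
        have hεpos : (0:ℝ) < 1 / ((m : ℝ) + 1) := by positivity
        obtain ⟨χ, hχT, hχ⟩ := hT_approx m (trunc m ψ₀) (trunc_mem_Kset hr hψ₀pld m)
          (1 / ((m : ℝ) + 1)) hεpos
        have hχK := hT_sub m hχT
        have hχmem : χ ∈ ⋃ n, T n := Set.mem_iUnion.mpr ⟨m, hχT⟩
        -- integrability of everything in sight
        have hint : ∀ (μ : Measure (Fin D → ℝ)), IsProbabilityMeasure μ →
            (∫⁻ x, ENNReal.ofReal (euclNorm x ^ r) ∂μ) ≠ ⊤ →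
            |∫ x, trunc m ψ₀ x ∂μ - ∫ x, χ x ∂μ| ≤ 1 / ((m : ℝ) + 1) := by
          intro μ hμprob hμ
          haveI := hμprob
          have h1 : Integrable (trunc m ψ₀) μ := integrable_pld hr μ hμ (pld_trunc hψ₀pld m)
          have h2 : Integrable χ μ := integrable_pld hr μ hμ hχK.1
          rw [← integral_sub h1 h2]
          calc |∫ x, (trunc m ψ₀ x - χ x) ∂μ| ≤ ∫ x, |trunc m ψ₀ x - χ x| ∂μ := by
                simpa [Real.norm_eq_abs] using
                  norm_integral_le_integral_norm (μ := μ) (fun x => trunc m ψ₀ x - χ x)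
            _ ≤ ∫ _x, (1 / ((m : ℝ) + 1)) ∂μ := by
                apply integral_mono (h1.sub h2).abs (integrable_const _)
                intro x
                show |trunc m ψ₀ x - χ x| ≤ 1 / ((m : ℝ) + 1)
                rw [abs_sub_comm]
                exact hχ x
            _ = 1 / ((m : ℝ) + 1) := by simp
        have hχS' : |∫ x, χ x ∂P - ∫ x, χ x ∂Q| ≤ S' :=
          le_csSup hBdd' ⟨χ, hχmem, rfl⟩
        have hP' := hint P hPprob hP
        have hQ' := hint Q hQprob hQ
        have habc : ∫ x, trunc m ψ₀ x ∂P - ∫ x, trunc m ψ₀ x ∂Q =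
            (∫ x, χ x ∂P - ∫ x, χ x ∂Q) + (∫ x, trunc m ψ₀ x ∂P - ∫ x, χ x ∂P)
              - (∫ x, trunc m ψ₀ x ∂Q - ∫ x, χ x ∂Q) := by ring
        have t1 := abs_sub ((∫ x, χ x ∂P - ∫ x, χ x ∂Q)
            + (∫ x, trunc m ψ₀ x ∂P - ∫ x, χ x ∂P))
          (∫ x, trunc m ψ₀ x ∂Q - ∫ x, χ x ∂Q)
        have t2 := abs_add_le (∫ x, χ x ∂P - ∫ x, χ x ∂Q)
          (∫ x, trunc m ψ₀ x ∂P - ∫ x, χ x ∂P)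
        rw [habc]
        linarith
      -- pass to the limit
      have hS'lim : Tendsto (fun m : ℕ => S' + 2 * (1 / ((m : ℝ) + 1))) atTop
          (𝓝 (S' + 2 * 0)) :=
        tendsto_const_nhds.add (tendsto_one_div_add_atTop_nhds_zero_nat.const_mul 2)
      have hfinal : |∫ x, ψ₀ x ∂P - ∫ x, ψ₀ x ∂Q| ≤ S' + 2 * 0 :=
        le_of_tendsto_of_tendsto htendsto hS'lim (Filter.Eventually.of_forall hstep)
      rw [hIψ]
      show |∫ x, ψ₀ x ∂P - ∫ x, ψ₀ x ∂Q| ≤ S'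
      linarith
    · -- S' ≤ S
      exact csSup_le_csSup hBdd (hT'_nonempty.image I) (Set.image_mono hT'sub)
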